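/- Let μ > 0 and define Q[p]₀ = −(∑_{k≥2}(k−1)pₖ)·p₀ and Q[p]ₙ = n·p_{n+1} + (∑_{k≥2}(k−1)pₖ)·p_{n−1} − (n−1+∑_{k≥2}(k−1)pₖ)·pₙ for n ≥ 1. If p has all pₙ ≥ 0, ∑ₙ pₙ = 1 and ∑ₙ n·pₙ = μ (with suitable summability), then ∑ₙ Q[p]ₙ = 0 and ∑ₙ n·Q[p]ₙ = 0. -/
import Mathlib


/-- `S p = ∑_{k≥2} (k−1)·pₖ`. -/
noncomputable def Sop (p : ℕ → ℝ) : ℝ := ∑' k : ℕ, ((k : ℝ) + 1) * p (k + 2)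

/-- The collision operator Q of the sticky dispersion mean-field system. -/
noncomputable def Qop (p : ℕ → ℝ) : ℕ → ℝ
  | 0 => -(Sop p) * p 0
  | (n + 1) => ((n : ℝ) + 1) * p (n + 2) + Sop p * p n
      - ((n : ℝ) + 1 - 1) * p (n + 1) - Sop p * p (n + 1)

/-- Conservation of mass and mean: `∑ₙ Q[p]ₙ = 0` and `∑ₙ n·Q[p]ₙ = 0`. -/
theorem stmt_10 (μ : ℝ) (hμ : 0 < μ) (p : ℕ → ℝ) (hpos : ∀ n, 0 ≤ p n)
    (hsum : Summable p) (hmom : Summable (fun n : ℕ => (n : ℝ) * p n))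
    (hmom2 : Summable (fun n : ℕ => (n : ℝ) ^ 2 * p n))
    (h1 : ∑' n, p n = 1) (h2 : ∑' n : ℕ, (n : ℝ) * p n = μ) :
    ∑' n, Qop p n = 0 ∧ ∑' n : ℕ, (n : ℝ) * Qop p n = 0 := by
  set M2 := ∑' n : ℕ, (n : ℝ) ^ 2 * p n with hM2
  -- basic summability
  have sg : Summable (fun n : ℕ => ((n : ℝ) - 1) * p n) :=
    (hmom.sub hsum).congr (fun n => by ring)
  have sq : Summable (fun n : ℕ => (n : ℝ) * ((n : ℝ) - 1) * p n) :=
    (hmom2.sub hmom).congr (fun n => by ring)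
  have sr : Summable (fun n : ℕ => ((n : ℝ) - 1) ^ 2 * p n) :=
    ((hmom2.sub (hmom.mul_left 2)).add hsum).congr (fun n => by ring)
  -- tsum values for the base sequences
  have tg : ∑' n : ℕ, ((n : ℝ) - 1) * p n = μ - 1 := by
    have h : ∑' n : ℕ, ((n : ℝ) * p n - p n) = μ - 1 := by
      rw [Summable.tsum_sub hmom hsum, h1, h2]
    rw [← h]; exact tsum_congr (fun n => by ring)
  have tq : ∑' n : ℕ, (n : ℝ) * ((n : ℝ) - 1) * p n = M2 - μ := by
    have h : ∑' n : ℕ, ((n : ℝ) ^ 2 * p n - (n : ℝ) * p n) = M2 - μ := by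
      rw [Summable.tsum_sub hmom2 hmom, h2]
    rw [← h]; exact tsum_congr (fun n => by ring)
  have tr : ∑' n : ℕ, ((n : ℝ) - 1) ^ 2 * p n = M2 - 2 * μ + 1 := by
    have h : ∑' n : ℕ, ((n : ℝ) ^ 2 * p n - 2 * ((n : ℝ) * p n) + p n)
        = M2 - 2 * μ + 1 := by
      rw [Summable.tsum_add (hmom2.sub (hmom.mul_left 2)) hsum,
        Summable.tsum_sub hmom2 (hmom.mul_left 2), tsum_mul_left, h1, h2]
    rw [← h]; exact tsum_congr (fun n => by ring)
  -- shifted summability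
  have sA : Summable (fun n : ℕ => ((n : ℝ) + 1) * p (n + 2)) :=
    ((summable_nat_add_iff 2).2 sg).congr (fun n => by push_cast; ring)
  have sC : Summable (fun n : ℕ => (n : ℝ) * p (n + 1)) :=
    ((summable_nat_add_iff 1).2 sg).congr (fun n => by push_cast; ring)
  have sD : Summable (fun n : ℕ => p (n + 1)) := (summable_nat_add_iff 1).2 hsum
  have sE : Summable (fun n : ℕ => ((n : ℝ) + 1) ^ 2 * p (n + 2)) :=
    ((summable_nat_add_iff 2).2 sr).congr (fun n => by push_cast; ring)
  have sF : Summable (fun n : ℕ => ((n : ℝ) + 1) * (n : ℝ) * p (n + 1)) :=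
    ((summable_nat_add_iff 1).2 sq).congr (fun n => by push_cast; ring)
  have sG0 : Summable (fun n : ℕ => ((n : ℝ) + 1) * p n) :=
    (hmom.add hsum).congr (fun n => by ring)
  have sH0 : Summable (fun n : ℕ => ((n : ℝ) + 1) * p (n + 1)) :=
    ((summable_nat_add_iff 1).2 hmom).congr (fun n => by push_cast; ring)
  -- shifted tsum values
  have tA : ∑' n : ℕ, ((n : ℝ) + 1) * p (n + 2) = μ - 1 + p 0 := by
    have h := Summable.sum_add_tsum_nat_add (f := fun n : ℕ => ((n : ℝ) - 1) * p n) 2 sg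
    rw [tg] at h
    have hr : ∑' n : ℕ, (((n + 2 : ℕ) : ℝ) - 1) * p (n + 2)
        = ∑' n : ℕ, ((n : ℝ) + 1) * p (n + 2) :=
      tsum_congr (fun n => by push_cast; ring)
    rw [hr] at h
    simp [Finset.sum_range_succ] at h
    linarith
  have hS : Sop p = μ - 1 + p 0 := tA
  have tC : ∑' n : ℕ, (n : ℝ) * p (n + 1) = μ - 1 + p 0 := by
    have h := Summable.tsum_eq_zero_add sg
    rw [tg] at h
    have hr : ∑' n : ℕ, (((n + 1 : ℕ) : ℝ) - 1) * p (n + 1)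
        = ∑' n : ℕ, (n : ℝ) * p (n + 1) :=
      tsum_congr (fun n => by push_cast; ring)
    rw [hr] at h
    simp at h
    linarith
  have tD : ∑' n : ℕ, p (n + 1) = 1 - p 0 := by
    have h := Summable.tsum_eq_zero_add hsum
    rw [h1] at h
    linarith
  have tE : ∑' n : ℕ, ((n : ℝ) + 1) ^ 2 * p (n + 2) = M2 - 2 * μ + 1 - p 0 := by
    have h := Summable.sum_add_tsum_nat_add (f := fun n : ℕ => ((n : ℝ) - 1) ^ 2 * p n) 2 sr
    rw [tr] at h
    have hr : ∑' n : ℕ, (((n + 2 : ℕ) : ℝ) - 1) ^ 2 * p (n + 2)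
        = ∑' n : ℕ, ((n : ℝ) + 1) ^ 2 * p (n + 2) :=
      tsum_congr (fun n => by push_cast; ring)
    rw [hr] at h
    simp [Finset.sum_range_succ] at h
    linarith
  have tF : ∑' n : ℕ, ((n : ℝ) + 1) * (n : ℝ) * p (n + 1) = M2 - μ := by
    have h := Summable.tsum_eq_zero_add sq
    rw [tq] at h
    have hr : ∑' n : ℕ, ((n + 1 : ℕ) : ℝ) * (((n + 1 : ℕ) : ℝ) - 1) * p (n + 1)
        = ∑' n : ℕ, ((n : ℝ) + 1) * (n : ℝ) * p (n + 1) :=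
      tsum_congr (fun n => by push_cast; ring)
    rw [hr] at h
    simp at h
    linarith
  have tG0 : ∑' n : ℕ, ((n : ℝ) + 1) * p n = μ + 1 := by
    have h : ∑' n : ℕ, ((n : ℝ) * p n + p n) = μ + 1 := by
      rw [Summable.tsum_add hmom hsum, h1, h2]
    rw [← h]; exact tsum_congr (fun n => by ring)
  have tH0 : ∑' n : ℕ, ((n : ℝ) + 1) * p (n + 1) = μ := by
    have h := Summable.tsum_eq_zero_add hmom
    rw [h2] at h
    have hr : ∑' n : ℕ, ((n + 1 : ℕ) : ℝ) * p (n + 1)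
        = ∑' n : ℕ, ((n : ℝ) + 1) * p (n + 1) :=
      tsum_congr (fun n => by push_cast; ring)
    rw [hr] at h
    simp at h
    linarith
  -- Part 1
  have sB : Summable (fun n : ℕ => Sop p * p n) := hsum.mul_left _
  have sD' : Summable (fun n : ℕ => Sop p * p (n + 1)) := sD.mul_left _
  have sC' : Summable (fun n : ℕ => ((n : ℝ) + 1 - 1) * p (n + 1)) :=
    sC.congr (fun n => by ring)
  have tC' : ∑' n : ℕ, ((n : ℝ) + 1 - 1) * p (n + 1) = μ - 1 + p 0 := by
    rw [← tC]; exact tsum_congr (fun n => by ring)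
  have hQshift : (fun n : ℕ => Qop p (n + 1))
      = fun n : ℕ => (((n : ℝ) + 1) * p (n + 2) + Sop p * p n
          - ((n : ℝ) + 1 - 1) * p (n + 1)) - Sop p * p (n + 1) := rfl
  have sQshift : Summable (fun n : ℕ => Qop p (n + 1)) := by
    rw [hQshift]; exact ((sA.add sB).sub sC').sub sD'
  have sQ : Summable (Qop p) := (summable_nat_add_iff 1).1 sQshift
  have tQshift : ∑' n : ℕ, Qop p (n + 1)
      = (μ - 1 + p 0) + Sop p * 1 - (μ - 1 + p 0) - Sop p * (1 - p 0) := by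
    rw [hQshift, Summable.tsum_sub ((sA.add sB).sub sC') sD', Summable.tsum_sub (sA.add sB) sC',
      Summable.tsum_add sA sB, tsum_mul_left, tsum_mul_left, tA, h1, tC', tD]
  have part1 : ∑' n, Qop p n = 0 := by
    rw [Summable.tsum_eq_zero_add sQ, tQshift]
    show -(Sop p) * p 0 + _ = 0
    ring
  -- Part 2
  have sG : Summable (fun n : ℕ => Sop p * (((n : ℝ) + 1) * p n)) := sG0.mul_left _
  have sH : Summable (fun n : ℕ => Sop p * (((n : ℝ) + 1) * p (n + 1))) := sH0.mul_left _
  have hQ2shift : (fun n : ℕ => ((n : ℝ) + 1) * Qop p (n + 1))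
      = fun n : ℕ => (((n : ℝ) + 1) ^ 2 * p (n + 2) + Sop p * (((n : ℝ) + 1) * p n)
          - ((n : ℝ) + 1) * (n : ℝ) * p (n + 1)) - Sop p * (((n : ℝ) + 1) * p (n + 1)) := by
    funext n
    show ((n : ℝ) + 1) * (((n : ℝ) + 1) * p (n + 2) + Sop p * p n
      - ((n : ℝ) + 1 - 1) * p (n + 1) - Sop p * p (n + 1)) = _
    ring
  have sQ2shift : Summable (fun n : ℕ => ((n : ℝ) + 1) * Qop p (n + 1)) := by
    rw [hQ2shift]; exact ((sE.add sG).sub sF).sub sH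
  have sQ2 : Summable (fun n : ℕ => (n : ℝ) * Qop p n) := by
    refine (summable_nat_add_iff 1).1 (sQ2shift.congr (fun n => ?_))
    push_cast; ring
  have tQ2shift : ∑' n : ℕ, ((n : ℝ) + 1) * Qop p (n + 1)
      = (M2 - 2 * μ + 1 - p 0) + Sop p * (μ + 1) - (M2 - μ) - Sop p * μ := by
    rw [hQ2shift, Summable.tsum_sub ((sE.add sG).sub sF) sH, Summable.tsum_sub (sE.add sG) sF,
      Summable.tsum_add sE sG, tsum_mul_left, tsum_mul_left, tE, tG0, tF, tH0]
  have part2 : ∑' n : ℕ, (n : ℝ) * Qop p n = 0 := by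
    rw [Summable.tsum_eq_zero_add sQ2]
    have hr : ∑' n : ℕ, ((n + 1 : ℕ) : ℝ) * Qop p (n + 1)
        = ∑' n : ℕ, ((n : ℝ) + 1) * Qop p (n + 1) :=
      tsum_congr (fun n => by push_cast; ring)
    rw [hr, tQ2shift, hS]
    push_cast
    ring
  exact ⟨part1, part2⟩
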